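/- The function g(t) := leb(A_t ∩ A) is convex on [0,∞); moreover, if d is strictly increasing (d(s₁) < d(s₂) for all s₁ < s₂ ≤ 0), then g is strictly convex on [0,∞). -/

import Mathlib

open MeasureTheory Set Filter

private lemma volume_slab (b t : ℝ) (D : ℝ → ℝ) (hD : Measurable D)
    (hint : MeasureTheory.IntegrableOn (fun u => D u - b) (Set.Iic (-t)))
    (hDb : ∀ u, b ≤ D u) :
    MeasureTheory.volume {p : ℝ × ℝ | p.2 ≤ 0 ∧ b ≤ p.1 ∧ p.1 < D (p.2 - t)} =
      ENNReal.ofReal (∫ u in Set.Iic (-t), (D u - b)) := by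
  have hSm : MeasurableSet {p : ℝ × ℝ | p.2 ≤ 0 ∧ b ≤ p.1 ∧ p.1 < D (p.2 - t)} := by
    have h1 : MeasurableSet {p : ℝ × ℝ | p.2 ≤ 0} :=
      measurableSet_le measurable_snd measurable_const
    have h2 : MeasurableSet {p : ℝ × ℝ | b ≤ p.1} :=
      measurableSet_le measurable_const measurable_fst
    have h3 : MeasurableSet {p : ℝ × ℝ | p.1 < D (p.2 - t)} :=
      measurableSet_lt measurable_fst (hD.comp (measurable_snd.sub measurable_const))
    exact h1.inter (h2.inter h3)
  rw [Measure.volume_eq_prod, Measure.prod_apply_symm hSm]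
  have hslice : ∀ s : ℝ,
      volume ((fun x => (x, s)) ⁻¹' {p : ℝ × ℝ | p.2 ≤ 0 ∧ b ≤ p.1 ∧ p.1 < D (p.2 - t)})
        = ENNReal.ofReal ((Set.Iic (-t)).indicator (fun u => D u - b) (s - t)) := by
    intro s
    by_cases hs : s ≤ 0
    · have he : (fun x => (x, s)) ⁻¹' {p : ℝ × ℝ | p.2 ≤ 0 ∧ b ≤ p.1 ∧ p.1 < D (p.2 - t)}
          = Set.Ico b (D (s - t)) := by
        ext x; simp [hs, Set.mem_Ico]
      have hmem : s - t ∈ Set.Iic (-t) := by simp [Set.mem_Iic]; linarith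
      rw [he, Real.volume_Ico, Set.indicator_of_mem hmem]
    · have he : (fun x => (x, s)) ⁻¹' {p : ℝ × ℝ | p.2 ≤ 0 ∧ b ≤ p.1 ∧ p.1 < D (p.2 - t)}
          = (∅ : Set ℝ) := by
        ext x; simp [hs]
      have hnmem : s - t ∉ Set.Iic (-t) := by simp [Set.mem_Iic]; linarith
      rw [he, measure_empty, Set.indicator_of_notMem hnmem, ENNReal.ofReal_zero]
  rw [lintegral_congr hslice]
  set F : ℝ → ℝ := (Set.Iic (-t)).indicator (fun u => D u - b) with hF
  have hFint : Integrable F := (integrable_indicator_iff measurableSet_Iic).2 hint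
  have hFcomp : Integrable (fun s => F (s - t)) := hFint.comp_sub_right t
  have hnn : 0 ≤ᵐ[volume] fun s => F (s - t) := by
    filter_upwards with s
    exact Set.indicator_nonneg (fun u _ => sub_nonneg.2 (hDb u)) _
  rw [← ofReal_integral_eq_lintegral_ofReal hFcomp hnn]
  congr 1
  rw [integral_sub_right_eq_self F t, hF, integral_indicator measurableSet_Iic]

/-- The overlap-area function `g(t) = leb(A_t ∩ A)` is convex on `[0, ∞)`;
moreover, if `d` is strictly increasing on `(-∞, 0]`, then `g` is strictly convex on
`[0, ∞)`. -/
theorem trawl_overlap_area_convexOn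
    (b : ℝ) (hb : b ∈ Set.Icc (0:ℝ) 1)
    (d : ℝ → ℝ)
    (hd_cont : ContinuousOn d (Set.Iic 0))
    (hd_mono : MonotoneOn d (Set.Iic 0))
    (hd_range : ∀ s ≤ (0:ℝ), d s ∈ Set.Icc b 1)
    (hd0 : d 0 = 1)
    (hd_lim : Filter.Tendsto d Filter.atBot (nhds b))
    (hd_int : MeasureTheory.IntegrableOn (fun s => d s - b) (Set.Iic 0))
    (A : ℝ → Set (ℝ × ℝ))
    (hA : ∀ t, A t = {p : ℝ × ℝ | p.2 ≤ t ∧ b ≤ p.1 ∧ p.1 < d (p.2 - t)}) :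
    ConvexOn ℝ (Set.Ici 0) (fun t => (volume (A t ∩ A 0)).toReal) ∧
    (StrictMonoOn d (Set.Iic 0) →
      StrictConvexOn ℝ (Set.Ici 0) (fun t => (volume (A t ∩ A 0)).toReal)) := by
  set f : ℝ → ℝ := fun u => d u - b with hfdef
  set G : ℝ → ℝ := fun t => ∫ u in Set.Iic (-t), f u with hGdef
  set D : ℝ → ℝ := fun s => d (min s 0) with hDdef
  have hDd : ∀ u : ℝ, u ≤ 0 → D u = d u := by
    intro u hu
    show d (min u 0) = d u
    rw [min_eq_left hu]
  have hDcont : Continuous D :=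
    hd_cont.comp_continuous (continuous_id.min continuous_const) (fun x => min_le_right x 0)
  have hDb : ∀ u, b ≤ D u := fun u => (hd_range _ (min_le_right u 0)).1
  have hIntIic : ∀ t : ℝ, 0 ≤ t → IntegrableOn f (Set.Iic (-t)) := fun t ht =>
    hd_int.mono_set (Set.Iic_subset_Iic.2 (by linarith))
  -- the key identity
  have hval : ∀ t ∈ Set.Ici (0:ℝ), (volume (A t ∩ A 0)).toReal = G t := by
    intro t ht
    have ht : (0:ℝ) ≤ t := ht
    have hset : A t ∩ A 0 = {p : ℝ × ℝ | p.2 ≤ 0 ∧ b ≤ p.1 ∧ p.1 < D (p.2 - t)} := by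
      ext p
      have hDeq : D (p.2 - t) = d (p.2 - t) → True := fun _ => trivial
      simp only [hA, Set.mem_inter_iff, Set.mem_setOf_eq, sub_zero]
      constructor
      · rintro ⟨⟨h1, h2, h3⟩, h4, h5, h6⟩
        refine ⟨h4, h2, ?_⟩
        show p.1 < D (p.2 - t)
        rwa [hDd _ (by linarith : p.2 - t ≤ 0)]
      · rintro ⟨h1, h2, h3⟩
        replace h3 : p.1 < d (p.2 - t) := by
          rwa [hDd _ (by linarith : p.2 - t ≤ 0)] at h3
        refine ⟨⟨by linarith, h2, h3⟩, h1, h2, ?_⟩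
        exact lt_of_lt_of_le h3 (hd_mono (by simp [Set.mem_Iic]; linarith)
          (by simp [Set.mem_Iic]; linarith) (by linarith))
    have hintD : IntegrableOn (fun u => D u - b) (Set.Iic (-t)) := by
      refine (hIntIic t ht).congr_fun (fun u hu => ?_) measurableSet_Iic
      have hu : u ≤ -t := hu
      show d u - b = D u - b
      rw [hDd _ (by linarith : u ≤ 0)]
    rw [hset, volume_slab b t D hDcont.measurable hintD hDb]
    have hieq : (∫ u in Set.Iic (-t), (D u - b)) = G t := by
      refine setIntegral_congr_fun measurableSet_Iic (fun u hu => ?_)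
      have hu : u ≤ -t := hu
      show D u - b = d u - b
      rw [hDd _ (by linarith : u ≤ 0)]
    rw [hieq]
    exact ENNReal.toReal_ofReal (setIntegral_nonneg measurableSet_Iic
      (fun u hu => sub_nonneg.2 (hd_range u (by linarith [Set.mem_Iic.1 hu])).1))
  -- difference of G
  have hGdiff : ∀ x y : ℝ, 0 ≤ x → x < y → G x - G y = ∫ u in Set.Ioc (-y) (-x), f u := by
    intro x y hx hxy
    have h1 : IntegrableOn f (Set.Iic (-x)) := hIntIic x hx
    have h2 : IntegrableOn f (Set.Iic (-y)) := hIntIic y (by linarith)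
    have := intervalIntegral.integral_Iic_sub_Iic h2 h1
    rw [hGdef]
    simp only []
    rw [this, intervalIntegral.integral_of_le (by linarith : -y ≤ -x)]
  -- bounds on the increments
  have hmemIic : ∀ x : ℝ, 0 ≤ x → -x ∈ Set.Iic (0:ℝ) := fun x hx => by
    simp [Set.mem_Iic]; linarith
  have hub : ∀ x y : ℝ, 0 ≤ x → x < y →
      (∫ u in Set.Ioc (-y) (-x), f u) ≤ f (-x) * (y - x) := by
    intro x y hx hxy
    have hInt : IntegrableOn f (Set.Ioc (-y) (-x)) :=
      (hIntIic x hx).mono_set Set.Ioc_subset_Iic_self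
    have hle : ∀ u ∈ Set.Ioc (-y) (-x), f u ≤ f (-x) := by
      intro u hu
      exact sub_le_sub_right (hd_mono (Set.mem_Iic.2 (by linarith [hu.2])) (hmemIic x hx) hu.2) b
    calc (∫ u in Set.Ioc (-y) (-x), f u) ≤ ∫ _ in Set.Ioc (-y) (-x), f (-x) :=
          setIntegral_mono_on hInt (integrableOn_const (by
            rw [Real.volume_Ioc]; exact ENNReal.ofReal_ne_top)) measurableSet_Ioc hle
      _ = f (-x) * (y - x) := by
          rw [setIntegral_const, measureReal_def, Real.volume_Ioc, ENNReal.toReal_ofReal (by linarith), smul_eq_mul,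
            mul_comm]
          ring_nf
  have hlb : ∀ x y : ℝ, 0 ≤ x → x < y →
      f (-y) * (y - x) ≤ (∫ u in Set.Ioc (-y) (-x), f u) := by
    intro x y hx hxy
    have hInt : IntegrableOn f (Set.Ioc (-y) (-x)) :=
      (hIntIic x hx).mono_set Set.Ioc_subset_Iic_self
    have hle : ∀ u ∈ Set.Ioc (-y) (-x), f (-y) ≤ f u := by
      intro u hu
      exact sub_le_sub_right (hd_mono (hmemIic y (by linarith))
        (Set.mem_Iic.2 (by linarith [hu.2])) hu.1.le) b
    calc f (-y) * (y - x) = ∫ _ in Set.Ioc (-y) (-x), f (-y) := by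
          rw [setIntegral_const, measureReal_def, Real.volume_Ioc, ENNReal.toReal_ofReal (by linarith), smul_eq_mul,
            mul_comm]
          ring_nf
      _ ≤ ∫ u in Set.Ioc (-y) (-x), f u :=
          setIntegral_mono_on (integrableOn_const (by
            rw [Real.volume_Ioc]; exact ENNReal.ofReal_ne_top)) hInt measurableSet_Ioc hle
  have hfnn : ∀ x : ℝ, 0 ≤ x → 0 ≤ f (-x) := fun x hx =>
    sub_nonneg.2 (hd_range _ (by linarith)).1
  -- convexity of G
  have hGconv : ConvexOn ℝ (Set.Ici 0) G := by
    refine convexOn_of_slope_mono_adjacent (convex_Ici 0) ?_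
    intro x y z hx hz hxy hyz
    have hx : (0:ℝ) ≤ x := hx
    have hy : (0:ℝ) ≤ y := le_trans hx hxy.le
    have e1 : G x - G y = ∫ u in Set.Ioc (-y) (-x), f u := hGdiff x y hx hxy
    have e2 : G y - G z = ∫ u in Set.Ioc (-z) (-y), f u := hGdiff y z hy hyz
    have I1ge := hlb x y hx hxy
    have I2le := hub y z hy hyz
    have hc := hfnn y hy
    rw [div_le_div_iff₀ (by linarith) (by linarith)]
    nlinarith [hfnn y hy]
  refine ⟨hGconv.congr (fun t ht => (hval t ht).symm), ?_⟩
  -- strict case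
  intro hstrict
  have hGsconv : StrictConvexOn ℝ (Set.Ici 0) G := by
    refine strictConvexOn_of_slope_strict_mono_adjacent (convex_Ici 0) ?_
    intro x y z hx hz hxy hyz
    have hx : (0:ℝ) ≤ x := hx
    have hy : (0:ℝ) ≤ y := le_trans hx hxy.le
    have e1 : G x - G y = ∫ u in Set.Ioc (-y) (-x), f u := hGdiff x y hx hxy
    have e2 : G y - G z = ∫ u in Set.Ioc (-z) (-y), f u := hGdiff y z hy hyz
    have I2le := hub y z hy hyz
    -- strict lower bound for I1
    have hI1 : f (-y) * (y - x) < ∫ u in Set.Ioc (-y) (-x), f u := by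
      have hInt : IntegrableOn f (Set.Ioc (-y) (-x)) :=
        (hIntIic x hx).mono_set Set.Ioc_subset_Iic_self
      have hIntc : IntegrableOn (fun _ : ℝ => f (-y)) (Set.Ioc (-y) (-x)) :=
        integrableOn_const (by rw [Real.volume_Ioc]; exact ENNReal.ofReal_ne_top)
      have hpos : 0 < ∫ u in Set.Ioc (-y) (-x), (f u - f (-y)) := by
        rw [setIntegral_pos_iff_support_of_nonneg_ae]
        · have hsub : Set.Ioc (-y) (-x) ⊆ Function.support (fun u => f u - f (-y)) ∩
              Set.Ioc (-y) (-x) := by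
            intro u hu
            refine ⟨?_, hu⟩
            have : f (-y) < f u := sub_lt_sub_right (hstrict (hmemIic y hy)
              (Set.mem_Iic.2 (by linarith [hu.2])) hu.1) b
            simp [Function.support]
            intro h
            linarith
          calc (0:ENNReal) < volume (Set.Ioc (-y) (-x)) := by
                rw [Real.volume_Ioc]; exact ENNReal.ofReal_pos.2 (by linarith)
            _ ≤ _ := measure_mono hsub
        · rw [EventuallyLE, ae_restrict_iff' measurableSet_Ioc]
          filter_upwards with u hu
          have : f (-y) ≤ f u := sub_le_sub_right (hd_mono (hmemIic y hy)
            (Set.mem_Iic.2 (by linarith [hu.2])) hu.1.le) b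
          simpa using this
        · exact hInt.sub hIntc
      have := integral_sub hInt hIntc
      rw [this] at hpos
      have hc : (∫ _ in Set.Ioc (-y) (-x), f (-y)) = f (-y) * (y - x) := by
        rw [setIntegral_const, measureReal_def, Real.volume_Ioc, ENNReal.toReal_ofReal (by linarith), smul_eq_mul,
          mul_comm]
        ring_nf
      linarith [hpos, hc ▸ hpos]
    have hc := hfnn y hy
    rw [div_lt_div_iff₀ (by linarith) (by linarith)]
    nlinarith
  exact hGsconv.congr (fun t ht => (hval t ht).symm)
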